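/- arXiv:1901.01625 — 4 statements merged into one kernel-verified Lean document; each statement's English description precedes it below -/
import Mathlib

section
/- For every real y > 0, ∫_0^y (1 − e^{−w})/w dw = γ + log y + ∫_y^∞ (e^{−w}/w) dw, where γ is the Euler–Mascheroni constant. In particular, taking y = 1 gives γ = ∫_0^1 (1 − e^{−w})/w dw − ∫_1^∞ (e^{−w}/w) dw. -/
open Real MeasureTheory Set Filter intervalIntegral Topology


lemma aux_one_sub_exp_le (w : ℝ) : 1 - Real.exp (-w) ≤ w := by
  have := Real.add_one_le_exp (-w); linarith

lemma aux_f1_nonneg {w : ℝ} (hw : 0 ≤ w) : 0 ≤ 1 - Real.exp (-w) := by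
  have : Real.exp (-w) ≤ 1 := by
    rw [Real.exp_le_one_iff]; linarith
  linarith

lemma integrableOn_f1 (M : ℝ) :
    IntegrableOn (fun w => (1 - Real.exp (-w)) / w) (Ioc 0 M) := by
  apply Integrable.mono' (g := fun _ => (1:ℝ))
  · exact integrableOn_const measure_Ioc_lt_top.ne
  · exact ((measurable_const.sub (Real.measurable_exp.comp measurable_neg)).div
      measurable_id).aestronglyMeasurable
  · filter_upwards [ae_restrict_mem measurableSet_Ioc] with w hw
    rw [Real.norm_eq_abs, abs_div, abs_of_nonneg (aux_f1_nonneg hw.1.le), abs_of_pos hw.1,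
      div_le_one hw.1]
    exact aux_one_sub_exp_le w

lemma integrableOn_f2 {y : ℝ} (hy : 0 < y) :
    IntegrableOn (fun w => Real.exp (-w) / w) (Ioi y) := by
  apply Integrable.mono' (g := fun w => Real.exp (-w) / y)
  · have h := (exp_neg_integrableOn_Ioi y (zero_lt_one)).div_const y
    simpa [one_mul] using h
  · exact ((Real.measurable_exp.comp measurable_neg).div measurable_id).aestronglyMeasurable
  · filter_upwards [ae_restrict_mem measurableSet_Ioi] with w hw
    rw [Real.norm_eq_abs, abs_div, abs_of_pos (Real.exp_pos _), abs_of_pos (hy.trans hw)]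
    gcongr
    exact hw.le

lemma integrableOn_explog_Ioi1 :
    IntegrableOn (fun t => Real.exp (-t) * Real.log t) (Ioi 1) := by
  apply Integrable.mono' (g := fun t => Real.exp (-t) * t)
  · have h := (Real.GammaIntegral_convergent (s := 2) two_pos).mono_set
      (Ioi_subset_Ioi zero_le_one)
    have he : (fun x : ℝ => Real.exp (-x) * x ^ ((2:ℝ) - 1)) = fun t => Real.exp (-t) * t := by
      funext t; rw [show (2:ℝ) - 1 = 1 by norm_num, Real.rpow_one]
    rwa [he] at h
  · exact ((Real.measurable_exp.comp measurable_neg).mul Real.measurable_log).aestronglyMeasurable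
  · filter_upwards [ae_restrict_mem measurableSet_Ioi] with t ht
    have ht1 : (1:ℝ) < t := ht
    rw [Real.norm_eq_abs, abs_mul, abs_of_pos (Real.exp_pos _),
      abs_of_nonneg (Real.log_nonneg ht1.le)]
    have : Real.log t ≤ t := (Real.log_le_sub_one_of_pos (by linarith)).trans (by linarith)
    gcongr

lemma aux_abs_log_le {t : ℝ} (h0 : 0 < t) (h1 : t ≤ 1) :
    |Real.log t| ≤ 2 * t ^ (-(1/2) : ℝ) := by
  have hrp : (0:ℝ) < t ^ (-(1/2) : ℝ) := Real.rpow_pos_of_pos h0 _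
  have h := Real.log_le_sub_one_of_pos hrp
  rw [Real.log_rpow h0] at h
  have hlog : Real.log t ≤ 0 := Real.log_nonpos h0.le h1
  rw [abs_of_nonpos hlog]
  nlinarith

lemma integrableOn_explog_Ioc :
    IntegrableOn (fun t => Real.exp (-t) * Real.log t) (Ioc (0:ℝ) 1) := by
  apply Integrable.mono' (g := fun t => 2 * t ^ (-(1/2) : ℝ))
  · have h := (intervalIntegrable_rpow' (a := 0) (b := 1) (r := -(1/2)) (by norm_num))
    have h2 := (intervalIntegrable_iff_integrableOn_Ioc_of_le zero_le_one).mp h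
    exact h2.const_mul 2
  · exact ((Real.measurable_exp.comp measurable_neg).mul Real.measurable_log).aestronglyMeasurable
  · filter_upwards [ae_restrict_mem measurableSet_Ioc] with t ht
    rw [Real.norm_eq_abs, abs_mul, abs_of_pos (Real.exp_pos _)]
    calc Real.exp (-t) * |Real.log t| ≤ 1 * |Real.log t| := by
          apply mul_le_mul_of_nonneg_right _ (abs_nonneg _)
          rw [Real.exp_le_one_iff]; linarith [ht.1]
      _ ≤ 2 * t ^ (-(1/2) : ℝ) := by rw [one_mul]; exact aux_abs_log_le ht.1 ht.2

lemma cont_g : ContinuousOn (fun t => (1 - Real.exp (-t)) * Real.log t) (Icc (0:ℝ) 1) := by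
  intro x hx
  rcases eq_or_lt_of_le hx.1 with h0 | h0
  · subst h0
    have hval : (1 - Real.exp (-(0:ℝ))) * Real.log 0 = 0 := by simp
    rw [ContinuousWithinAt, hval]
    apply squeeze_zero_norm' (a := fun t => ‖t * Real.log t‖)
    · filter_upwards [eventually_mem_nhdsWithin] with t (ht : t ∈ Icc (0:ℝ) 1)
      rw [Real.norm_eq_abs, Real.norm_eq_abs, abs_mul, abs_mul,
        abs_of_nonneg (aux_f1_nonneg ht.1), abs_of_nonneg ht.1]
      exact mul_le_mul_of_nonneg_right (aux_one_sub_exp_le t) (abs_nonneg _)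
    · have h := (Real.continuous_mul_log.tendsto 0).mono_left
        (nhdsWithin_le_nhds (s := Icc (0:ℝ) 1))
      simp only [zero_mul, Real.log_zero, mul_zero] at h
      simpa using h.norm
  · exact ((continuous_const.sub (Real.continuous_exp.comp continuous_neg)).continuousAt.mul
      (Real.continuousAt_log h0.ne')).continuousWithinAt

lemma deriv_g {t : ℝ} (ht : t ≠ 0) :
    HasDerivAt (fun t => (1 - Real.exp (-t)) * Real.log t)
      (Real.exp (-t) * Real.log t + (1 - Real.exp (-t)) / t) t := by
  have h1 : HasDerivAt (fun t : ℝ => 1 - Real.exp (-t)) (Real.exp (-t)) t := by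
    have := ((hasDerivAt_neg t).exp).const_sub 1
    exact this.congr_deriv (by ring)
  have h2 := Real.hasDerivAt_log ht
  have := h1.mul h2
  rw [div_eq_mul_inv]; exact this

lemma ibp_Ioc : ∫ t in (0:ℝ)..1, Real.exp (-t) * Real.log t
    = - ∫ t in (0:ℝ)..1, (1 - Real.exp (-t)) / t := by
  have hint1 : IntervalIntegrable (fun t => Real.exp (-t) * Real.log t) volume 0 1 :=
    (intervalIntegrable_iff_integrableOn_Ioc_of_le zero_le_one).mpr integrableOn_explog_Ioc
  have hint2 : IntervalIntegrable (fun t => (1 - Real.exp (-t)) / t) volume 0 1 :=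
    (intervalIntegrable_iff_integrableOn_Ioc_of_le zero_le_one).mpr (integrableOn_f1 1)
  have key := intervalIntegral.integral_eq_sub_of_hasDerivAt_of_le zero_le_one cont_g
    (fun x hx => deriv_g (ne_of_gt hx.1)) (hint1.add hint2)
  simp only [Real.log_one, mul_zero, neg_zero, Real.exp_zero, sub_self, zero_mul,
    Real.log_zero, mul_zero, sub_zero] at key
  rw [intervalIntegral.integral_add hint1 hint2] at key
  linarith

lemma ibp_Ioi : ∫ t in Ioi (1:ℝ), Real.exp (-t) * Real.log t
    = ∫ t in Ioi (1:ℝ), Real.exp (-t) / t := by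
  have hd : ∀ x ∈ Ioi (1:ℝ), HasDerivAt (fun t => -(Real.exp (-t) * Real.log t))
      (Real.exp (-x) * Real.log x - Real.exp (-x) / x) x := by
    intro x hx
    have hx0 : x ≠ 0 := by have : (1:ℝ) < x := hx; linarith
    have h1 : HasDerivAt (fun t : ℝ => Real.exp (-t)) (-Real.exp (-x)) x := by
      have := (hasDerivAt_neg x).exp
      convert this using 1; ring
    have := (h1.mul (Real.hasDerivAt_log hx0)).neg
    exact this.congr_deriv (by field_simp; ring)
  have hcont : ContinuousWithinAt (fun t => -(Real.exp (-t) * Real.log t)) (Ici (1:ℝ)) 1 := by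
    have : ContinuousAt (fun t => -(Real.exp (-t) * Real.log t)) 1 :=
      (((Real.continuous_exp.comp continuous_neg).continuousAt).mul
        (Real.continuousAt_log one_ne_zero)).neg
    exact this.continuousWithinAt
  have htend : Tendsto (fun t => -(Real.exp (-t) * Real.log t)) atTop (𝓝 0) := by
    apply squeeze_zero_norm' (a := fun t => t ^ 1 * Real.exp (-t))
    · filter_upwards [eventually_ge_atTop (1:ℝ)] with t ht
      rw [norm_neg, Real.norm_eq_abs, abs_mul, abs_of_pos (Real.exp_pos _),
        abs_of_nonneg (Real.log_nonneg ht), pow_one, mul_comm]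
      apply mul_le_mul_of_nonneg_right _ (Real.exp_pos _).le
      exact (Real.log_le_sub_one_of_pos (by linarith)).trans (by linarith)
    · exact tendsto_pow_mul_exp_neg_atTop_nhds_zero 1
  have hint : IntegrableOn (fun x => Real.exp (-x) * Real.log x - Real.exp (-x) / x)
      (Ioi (1:ℝ)) := integrableOn_explog_Ioi1.sub (integrableOn_f2 zero_lt_one)
  have key := integral_Ioi_of_hasDerivAt_of_tendsto hcont hd hint htend
  simp only [Real.log_one, mul_zero, neg_zero, zero_sub, neg_neg] at key
  rw [integral_sub integrableOn_explog_Ioi1 (integrableOn_f2 zero_lt_one)] at key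
  linarith

lemma gamma_eq : Real.eulerMascheroniConstant
    = -∫ t in Ioi (0:ℝ), Real.exp (-t) * Real.log t := by
  have h1 := Complex.hasDerivAt_GammaIntegral (s := 1) (by norm_num)
  have h2 : (∫ t : ℝ in Ioi 0, (t:ℂ) ^ ((1:ℂ) - 1) * (Real.log t * Real.exp (-t)))
      = ((∫ t in Ioi (0:ℝ), Real.exp (-t) * Real.log t : ℝ) : ℂ) := by
    calc ∫ t : ℝ in Ioi 0, (t:ℂ) ^ ((1:ℂ) - 1) * (Real.log t * Real.exp (-t))
        = ∫ t : ℝ in Ioi 0, ((Real.exp (-t) * Real.log t : ℝ) : ℂ) := by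
          apply setIntegral_congr_fun measurableSet_Ioi
          intro t ht
          simp only [sub_self, Complex.cpow_zero, one_mul]
          push_cast
          ring
      _ = ((∫ t in Ioi (0:ℝ), Real.exp (-t) * Real.log t : ℝ) : ℂ) := _root_.integral_ofReal
  rw [h2] at h1
  have heq : Complex.GammaIntegral =ᶠ[nhds (1:ℂ)] Complex.Gamma := by
    have hopen : IsOpen {s : ℂ | 0 < s.re} := isOpen_lt continuous_const Complex.continuous_re
    filter_upwards [hopen.mem_nhds (by norm_num : (0:ℝ) < (1:ℂ).re)] with s hs
    exact (Complex.Gamma_eq_integral hs).symm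
  have h3 : HasDerivAt Complex.Gamma
      ((∫ t in Ioi (0:ℝ), Real.exp (-t) * Real.log t : ℝ) : ℂ) 1 :=
    h1.congr_of_eventuallyEq heq.symm
  have h4 : HasDerivAt Real.Gamma (∫ t in Ioi (0:ℝ), Real.exp (-t) * Real.log t) 1 := by
    have h5 : HasDerivAt (fun x : ℝ => (Complex.Gamma x).re)
        ((((∫ t in Ioi (0:ℝ), Real.exp (-t) * Real.log t : ℝ) : ℂ)).re) (1:ℝ) := by
      apply HasDerivAt.real_of_complex
      simpa using h3
    simp only [Complex.ofReal_re] at h5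
    have hfun : (fun x : ℝ => (Complex.Gamma x).re) = Real.Gamma := by
      funext x
      rw [Complex.Gamma_ofReal, Complex.ofReal_re]
    rwa [hfun] at h5
  have h6 := Real.hasDerivAt_Gamma_one
  have := h6.unique h4
  linarith

lemma key1 : Real.eulerMascheroniConstant
    = (∫ w in (0:ℝ)..1, (1 - Real.exp (-w)) / w)
        - ∫ w in Ioi (1:ℝ), Real.exp (-w) / w := by
  rw [gamma_eq]
  have hsplit : (∫ t in Ioi (0:ℝ), Real.exp (-t) * Real.log t)
      = (∫ t in Ioc (0:ℝ) 1, Real.exp (-t) * Real.log t)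
        + ∫ t in Ioi (1:ℝ), Real.exp (-t) * Real.log t := by
    rw [← setIntegral_union (Ioc_disjoint_Ioi le_rfl) measurableSet_Ioi
      integrableOn_explog_Ioc integrableOn_explog_Ioi1, Ioc_union_Ioi_eq_Ioi zero_le_one]
  have hIoc : (∫ t in Ioc (0:ℝ) 1, Real.exp (-t) * Real.log t)
      = - ∫ w in (0:ℝ)..1, (1 - Real.exp (-w)) / w := by
    rw [← intervalIntegral.integral_of_le zero_le_one]
    exact ibp_Ioc
  rw [hsplit, hIoc, ibp_Ioi]
  ring

lemma f2shift {y : ℝ} (hy : 0 < y) :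
    ∫ w in (1:ℝ)..y, Real.exp (-w) / w
      = (∫ w in Ioi (1:ℝ), Real.exp (-w) / w) - ∫ w in Ioi y, Real.exp (-w) / w := by
  rcases le_total 1 y with h | h
  · rw [intervalIntegral.integral_of_le h]
    have : (∫ w in Ioi (1:ℝ), Real.exp (-w) / w)
        = (∫ w in Ioc (1:ℝ) y, Real.exp (-w) / w) + ∫ w in Ioi y, Real.exp (-w) / w := by
      rw [← setIntegral_union (Ioc_disjoint_Ioi le_rfl) measurableSet_Ioi
        ((integrableOn_f2 zero_lt_one).mono_set Ioc_subset_Ioi_self)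
        (integrableOn_f2 hy), Ioc_union_Ioi_eq_Ioi h]
    linarith
  · rw [intervalIntegral.integral_symm, intervalIntegral.integral_of_le h]
    have : (∫ w in Ioi y, Real.exp (-w) / w)
        = (∫ w in Ioc y 1, Real.exp (-w) / w) + ∫ w in Ioi (1:ℝ), Real.exp (-w) / w := by
      rw [← setIntegral_union (Ioc_disjoint_Ioi le_rfl) measurableSet_Ioi
        ((integrableOn_f2 hy).mono_set Ioc_subset_Ioi_self)
        (integrableOn_f2 zero_lt_one), Ioc_union_Ioi_eq_Ioi h]
    linarith


/-- **An integral identity for the Euler–Mascheroni constant.**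
For every real `y > 0`, `∫_0^y (1 − e^{−w})/w dw = γ + log y + ∫_y^∞ (e^{−w}/w) dw`, where `γ` is
the Euler–Mascheroni constant.  In particular, taking `y = 1`,
`γ = ∫_0^1 (1 − e^{−w})/w dw − ∫_1^∞ (e^{−w}/w) dw`. -/
theorem eulerMascheroni_integral_identity :
    (∀ y : ℝ, 0 < y →
      ∫ w in (0 : ℝ)..y, (1 - Real.exp (-w)) / w
        = Real.eulerMascheroniConstant + Real.log y
            + ∫ w in Set.Ioi y, Real.exp (-w) / w)
    ∧ Real.eulerMascheroniConstant
        = (∫ w in (0 : ℝ)..1, (1 - Real.exp (-w)) / w)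
            - ∫ w in Set.Ioi (1 : ℝ), Real.exp (-w) / w := by
  refine ⟨fun y hy => ?_, key1⟩
  have hminpos : (0:ℝ) < min 1 y := lt_min one_pos hy
  -- interval integrability of f1 on (0,1) and (1,y)
  have hf1a : IntervalIntegrable (fun w => (1 - Real.exp (-w)) / w) volume 0 1 :=
    (intervalIntegrable_iff_integrableOn_Ioc_of_le zero_le_one).mpr (integrableOn_f1 1)
  have hf1b : IntervalIntegrable (fun w => (1 - Real.exp (-w)) / w) volume 1 y := by
    rw [intervalIntegrable_iff]
    exact (integrableOn_f1 (max 1 y)).mono_set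
      (Ioc_subset_Ioc hminpos.le le_rfl)
  have hf2b : IntervalIntegrable (fun w => Real.exp (-w) / w) volume 1 y := by
    rw [intervalIntegrable_iff]
    exact (integrableOn_f2 hminpos).mono_set Ioc_subset_Ioi_self
  have hadd : ∫ w in (0:ℝ)..y, (1 - Real.exp (-w)) / w
      = (∫ w in (0:ℝ)..1, (1 - Real.exp (-w)) / w)
        + ∫ w in (1:ℝ)..y, (1 - Real.exp (-w)) / w :=
    (intervalIntegral.integral_add_adjacent_intervals hf1a hf1b).symm
  have hlog : (∫ w in (1:ℝ)..y, (1 - Real.exp (-w)) / w)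
      + ∫ w in (1:ℝ)..y, Real.exp (-w) / w = Real.log y := by
    rw [← intervalIntegral.integral_add hf1b hf2b]
    have hcongr : ∀ w ∈ uIcc (1:ℝ) y,
        (1 - Real.exp (-w)) / w + Real.exp (-w) / w = 1 / w := by
      intro w hw
      have hw0 : 0 < w := lt_of_lt_of_le hminpos (by
        simpa [uIcc, le_min_iff] using hw.1)
      field_simp
      ring
    rw [intervalIntegral.integral_congr hcongr, integral_one_div_of_pos one_pos hy, div_one]
  have hshift := f2shift hy
  rw [hadd, key1]
  linarith
end

section
/- For every real a ≥ 0, ∫_{−π}^{π} θ · exp(a e^{iθ}) dθ = −2πi ∫_0^a ((e^{−w} − 1)/w) dw. -/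
open MeasureTheory Complex Nat

lemma hasDerivAt_aux (n : ℕ) (hn : (n:ℂ) ≠ 0) (θ : ℝ) :
    HasDerivAt (fun t : ℝ => (-Complex.I * t / n) * Complex.exp (n * t * Complex.I)
        + Complex.exp (n * t * Complex.I) / (n:ℂ)^2)
      ((θ:ℂ) * Complex.exp (n * θ * Complex.I)) θ := by
  have h1 : HasDerivAt (fun t : ℝ => (t:ℂ)) 1 θ := by
    simpa using (hasDerivAt_id θ).ofReal_comp
  have h2 : HasDerivAt (fun t : ℝ => (n:ℂ) * t * Complex.I) ((n:ℂ)*Complex.I) θ := by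
    simpa using ((h1.const_mul (n:ℂ)).mul_const Complex.I)
  have h3 := h2.cexp
  have h4 : HasDerivAt (fun t : ℝ => -Complex.I * (t:ℂ) / n) (-Complex.I/n) θ := by
    simpa using (h1.const_mul (-Complex.I)).div_const (n:ℂ)
  have h5 := (h4.mul h3).add (h3.div_const ((n:ℂ)^2))
  convert h5 using 1
  have hI := Complex.I_mul_I
  case e'_4 => rfl
  case e'_8 => rfl
  field_simp
  ring_nf
  rw [Complex.I_sq]
  ring

lemma integral_theta_exp (n : ℕ) (hn : n ≠ 0) :
    ∫ θ in (-Real.pi)..Real.pi, (θ:ℂ) * Complex.exp (n * θ * Complex.I)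
      = -2*Real.pi*Complex.I*(-1)^n/n := by
  have hn' : (n:ℂ) ≠ 0 := Nat.cast_ne_zero.2 hn
  have hcont : Continuous (fun θ : ℝ => (θ:ℂ) * Complex.exp (n * θ * Complex.I)) := by
    fun_prop
  rw [intervalIntegral.integral_eq_sub_of_hasDerivAt
    (fun θ _ => hasDerivAt_aux n hn' θ) (hcont.intervalIntegrable _ _)]
  have hpi : Complex.exp ((n:ℂ) * (Real.pi:ℂ) * Complex.I) = (-1)^n := by
    rw [mul_assoc, Complex.exp_nat_mul, Complex.exp_pi_mul_I]
  have hpi' : Complex.exp ((n:ℂ) * ((-Real.pi : ℝ):ℂ) * Complex.I) = ((-1)^n)⁻¹ := by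
    push_cast
    rw [show (n:ℂ) * (-(Real.pi:ℂ)) * Complex.I = -((n:ℂ) * ((Real.pi:ℂ) * Complex.I)) by ring,
      Complex.exp_neg, Complex.exp_nat_mul, Complex.exp_pi_mul_I]
  have hne : ((-1:ℂ))^n ≠ 0 := by
    simp [pow_ne_zero]
  have h1 : ((-1:ℂ))^n * (-1)^n = 1 := by
    rw [← pow_add]
    simp [pow_add, ← two_mul, pow_mul]
  have hinv : (((-1:ℂ))^n)⁻¹ = (-1)^n := by
    rw [inv_eq_iff_eq_inv]
    exact eq_inv_of_mul_eq_one_left h1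
  rw [hpi, hpi', hinv]
  push_cast
  field_simp
  ring

lemma termwise_complex (a : ℝ) (n : ℕ) :
    ∫ θ in (-Real.pi)..Real.pi, (θ:ℂ) * (((a:ℂ) * Complex.exp (θ * Complex.I))^n / n !)
      = -2*Real.pi*Complex.I * ((((-1)^n * a^n / (n * n !) : ℝ)) : ℂ) := by
  have key : ∀ θ:ℝ, (θ:ℂ) * (((a:ℂ) * Complex.exp (θ * Complex.I))^n / n !)
      = ((a:ℂ)^n/n !) * ((θ:ℂ) * Complex.exp (n * θ * Complex.I)) := by
    intro θ
    rw [mul_pow, ← Complex.exp_nat_mul, ← mul_assoc]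
    ring
  simp only [key]
  rw [intervalIntegral.integral_const_mul]
  rcases eq_or_ne n 0 with rfl | hn
  · simp only [Nat.cast_zero, zero_mul, Complex.exp_zero, mul_one, pow_zero]
    rw [intervalIntegral.integral_ofReal, integral_id]
    norm_num
  · rw [integral_theta_exp n hn]
    have h1 : (n:ℂ) ≠ 0 := Nat.cast_ne_zero.2 hn
    have h2 : ((n ! : ℕ):ℂ) ≠ 0 := Nat.cast_ne_zero.2 n.factorial_ne_zero
    push_cast
    field_simp

lemma lhs_eq (a : ℝ) (ha : 0 ≤ a) :
    ∫ θ in (-Real.pi)..Real.pi, (θ : ℂ) * Complex.exp ((a : ℂ) * Complex.exp (θ * Complex.I))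
      = ∑' n : ℕ, (-2*Real.pi*Complex.I * ((((-1)^n * a^n / (n * n !) : ℝ)) : ℂ)) := by
  have hpi := Real.pi_pos
  have hle : (-Real.pi : ℝ) ≤ Real.pi := by linarith
  set F : ℕ → ℝ → ℂ := fun n θ => (θ:ℂ) * (((a:ℂ) * Complex.exp (θ * Complex.I))^n / n !)
    with hF
  have hexp : ∀ z : ℂ, Complex.exp z = ∑' n : ℕ, z^n / n ! := by
    intro z
    rw [Complex.exp_eq_exp_ℂ, NormedSpace.exp_eq_tsum_div]
  have hpt : ∀ θ : ℝ, (θ : ℂ) * Complex.exp ((a : ℂ) * Complex.exp (θ * Complex.I))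
      = ∑' n : ℕ, F n θ := by
    intro θ
    rw [hexp, ← tsum_mul_left]
  have hcont : ∀ n, Continuous (F n) := by
    intro n
    apply Complex.continuous_ofReal.mul
    exact ((continuous_const.mul (Complex.continuous_exp.comp
      (Complex.continuous_ofReal.mul continuous_const))).pow n).div_const _
  have hint : ∀ n, IntegrableOn (F n) (Set.Ioc (-Real.pi) Real.pi) volume :=
    fun n => (hcont n).integrableOn_Ioc
  have hFnorm : ∀ n, ∀ θ ∈ Set.Ioc (-Real.pi) Real.pi,
      ‖F n θ‖ ≤ Real.pi * (a^n / n !) := by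
    intro n θ hθ
    have h1 : ‖F n θ‖ = |θ| * (a^n / n !) := by
      simp only [hF]
      rw [norm_mul, norm_div, norm_pow, norm_mul,
        Complex.norm_exp_ofReal_mul_I]
      simp [Complex.norm_real, Real.norm_eq_abs, _root_.abs_of_nonneg ha]
    rw [h1]
    have h2 : |θ| ≤ Real.pi := by
      rw [abs_le]; exact ⟨le_of_lt hθ.1, hθ.2⟩
    apply mul_le_mul_of_nonneg_right h2 (by positivity)
  have hsum : Summable (fun n => ∫ θ in Set.Ioc (-Real.pi) Real.pi, ‖F n θ‖) := by
    apply Summable.of_nonneg_of_le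
      (fun n => integral_nonneg (fun θ => norm_nonneg _))
      (fun n => ?_)
      (((Real.summable_pow_div_factorial a).mul_left Real.pi).mul_right (2*Real.pi))
    calc (∫ θ in Set.Ioc (-Real.pi) Real.pi, ‖F n θ‖)
        ≤ ‖∫ θ in Set.Ioc (-Real.pi) Real.pi, ‖F n θ‖‖ := le_abs_self _
      _ ≤ (Real.pi * (a^n / n !)) * (volume (Set.Ioc (-Real.pi) Real.pi)).toReal := by
          refine (fun hC hs => norm_setIntegral_le_of_norm_le_const hs hC) ?_ ?_
          · intro x hx
            rw [norm_norm]
            exact hFnorm n x hx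
          · rw [Real.volume_Ioc]; exact ENNReal.ofReal_lt_top
      _ = Real.pi * (a^n / n !) * (2*Real.pi) := by
          rw [Real.volume_Ioc, ENNReal.toReal_ofReal (by linarith)]
          ring_nf
  rw [intervalIntegral.integral_of_le hle]
  rw [MeasureTheory.setIntegral_congr_fun measurableSet_Ioc (fun θ _ => hpt θ)]
  rw [← MeasureTheory.integral_tsum_of_summable_integral_norm hint hsum]
  congr 1
  funext n
  rw [← intervalIntegral.integral_of_le hle]
  exact termwise_complex a n

lemma rhs_eq (a : ℝ) (ha : 0 ≤ a) :
    (∫ w in (0:ℝ)..a, (Real.exp (-w) - 1)/w)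
      = ∑' n : ℕ, ((-1:ℝ)^(n+1) * a^(n+1) / ((n+1) * (n+1)!)) := by
  set G : ℕ → ℝ → ℝ := fun n w => (-1)^(n+1) * w^n / (n+1)! with hG
  have hpt : ∀ w ∈ Set.Ioc (0:ℝ) a, (Real.exp (-w) - 1)/w = ∑' n : ℕ, G n w := by
    intro w hw
    have hw0 : (0:ℝ) < w := hw.1
    have hsumw : Summable (fun n : ℕ => (-w)^n / n !) := Real.summable_pow_div_factorial (-w)
    have hexp : Real.exp (-w) = ∑' n : ℕ, (-w)^n / n ! := by
      rw [Real.exp_eq_exp_ℝ, NormedSpace.exp_eq_tsum_div]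
    have h0 : Real.exp (-w) - 1 = ∑' n : ℕ, (-w)^(n+1) / (n+1)! := by
      rw [hexp, Summable.tsum_eq_zero_add hsumw]
      simp
    rw [h0, ← tsum_div_const]
    congr 1
    funext n
    simp only [hG]
    rw [neg_pow, pow_succ]
    field_simp
    ring
  have hcont : ∀ n, Continuous (G n) :=
    fun n => ((continuous_const.mul (continuous_pow n)).div_const _)
  have hint : ∀ n, IntegrableOn (G n) (Set.Ioc (0:ℝ) a) volume :=
    fun n => (hcont n).integrableOn_Ioc
  have hGnorm : ∀ n, ∀ w ∈ Set.Ioc (0:ℝ) a, ‖G n w‖ ≤ a^n / n ! := by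
    intro n w hw
    have h1 : ‖G n w‖ = w^n / (n+1)! := by
      simp only [hG]
      rw [Real.norm_eq_abs, abs_div, abs_mul, _root_.abs_pow, _root_.abs_pow, abs_neg, abs_one, one_pow,
        one_mul, _root_.abs_of_nonneg (le_of_lt hw.1),
        _root_.abs_of_nonneg (by positivity : (0:ℝ) ≤ ((n+1)! : ℕ))]
    rw [h1]
    have h2 : w^n ≤ a^n := pow_le_pow_left₀ (le_of_lt hw.1) hw.2 n
    have h3 : ((n !:ℕ):ℝ) ≤ (((n+1)! : ℕ):ℝ) := by
      exact_mod_cast Nat.factorial_le (Nat.le_succ n)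
    exact div_le_div₀ (pow_nonneg ha n) h2 (by positivity) h3
  have hsum : Summable (fun n => ∫ w in Set.Ioc (0:ℝ) a, ‖G n w‖) := by
    apply Summable.of_nonneg_of_le
      (fun n => integral_nonneg (fun w => norm_nonneg _))
      (fun n => ?_)
      ((Real.summable_pow_div_factorial a).mul_right a)
    calc (∫ w in Set.Ioc (0:ℝ) a, ‖G n w‖)
        ≤ ‖∫ w in Set.Ioc (0:ℝ) a, ‖G n w‖‖ := le_abs_self _
      _ ≤ (a^n / n !) * (volume (Set.Ioc (0:ℝ) a)).toReal := by
          refine (fun hC hs => norm_setIntegral_le_of_norm_le_const hs hC) ?_ ?_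
          · intro x hx
            rw [norm_norm]
            exact hGnorm n x hx
          · rw [Real.volume_Ioc]; exact ENNReal.ofReal_lt_top
      _ = a^n / n ! * a := by
          rw [Real.volume_Ioc, ENNReal.toReal_ofReal (by linarith)]
          ring
  rw [intervalIntegral.integral_of_le ha,
    MeasureTheory.setIntegral_congr_fun measurableSet_Ioc hpt,
    ← MeasureTheory.integral_tsum_of_summable_integral_norm hint hsum]
  congr 1
  funext n
  rw [← intervalIntegral.integral_of_le ha]
  have : ∀ w : ℝ, G n w = ((-1:ℝ)^(n+1) / (n+1)!) * w^n := by
    intro w; simp only [hG]; ring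
  simp only [this]
  rw [intervalIntegral.integral_const_mul, integral_pow]
  have hfac : (((n+1)! : ℕ):ℝ) ≠ 0 := by positivity
  have hn1 : ((n:ℝ)+1) ≠ 0 := by positivity
  push_cast
  field_simp
  simp

/-- For every real `a ≥ 0`,
`∫_{−π}^{π} θ · exp(a e^{iθ}) dθ = −2πi ∫_0^a ((e^{−w} − 1)/w) dw`. -/
theorem integral_theta_mul_exp_mul_exp_I (a : ℝ) (ha : 0 ≤ a) :
    ∫ θ in (-Real.pi)..Real.pi, (θ : ℂ) * Complex.exp ((a : ℂ) * Complex.exp (θ * Complex.I))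
      = -2 * (Real.pi : ℂ) * Complex.I *
          ((∫ w in (0 : ℝ)..a, (Real.exp (-w) - 1) / w : ℝ) : ℂ) := by
  rw [lhs_eq a ha, rhs_eq a ha]
  set k : ℕ → ℝ := fun n => ((-1)^n * a^n / (n * n !) : ℝ) with hk
  have hbound : ∀ n : ℕ, ‖k n‖ ≤ a^n / n ! := by
    intro n
    match n with
    | 0 => simp [hk]
    | (m+1) =>
      simp only [hk]
      rw [Real.norm_eq_abs, abs_div, abs_mul, _root_.abs_pow, _root_.abs_pow, abs_neg,
        abs_one, one_pow, one_mul, _root_.abs_of_nonneg ha,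
        _root_.abs_of_nonneg (show (0:ℝ) ≤ ((m+1:ℕ):ℝ) * ((m+1)! : ℕ) by positivity)]
      apply div_le_div₀ (pow_nonneg ha _) le_rfl (by positivity)
      exact le_mul_of_one_le_left (by positivity) (by exact_mod_cast Nat.succ_le_succ m.zero_le)
  have hksum : Summable k :=
    Summable.of_norm_bounded (Real.summable_pow_div_factorial a) hbound
  have hk0 : k 0 = 0 := by simp [hk]
  have hshift : ∑' n, k n = ∑' n : ℕ, ((-1:ℝ)^(n+1) * a^(n+1) / ((n+1) * (n+1)!)) := by
    rw [Summable.tsum_eq_zero_add hksum, hk0, zero_add]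
    congr 1
    funext n
    simp only [hk]
    push_cast
    ring
  calc ∑' n : ℕ, (-2*Real.pi*Complex.I * ((k n : ℝ) : ℂ))
      = -2*Real.pi*Complex.I * ((∑' n, k n : ℝ) : ℂ) := by
        rw [Complex.ofReal_tsum, tsum_mul_left]
    _ = _ := by rw [hshift]
end

section
/- Let ε > 0. Let q : ℕ_{≥1} → ℝ be completely multiplicative (q_{mn} = q_m q_n for all m, n, and q_1 = 1) with 0 ≤ q_p < 1 for every prime p and q_p = 0 for all but finitely many primes p. Let (a_k)_{k ≥ 1} be nonnegative reals with Σ_{k≥1} a_k < ∞. Then the integral I_1 = ∫_ℝ (Σ_{k≥1} a_k k^{−it}) · |Σ_{n≥1} q_n n^{it}|^2 · e^{−ε^2 t^2} dt is a real number and satisfies I_1 ≥ (Σ_{k≥1} a_k q_k) · ∫_ℝ |Σ_{n≥1} q_n n^{it}|^2 e^{−ε^2 t^2} dt. -/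
open Complex MeasureTheory Real

lemma gauss_combine (ε x : ℝ) (t : ℝ) :
    Complex.exp (Complex.I * t * x) * (Real.exp (-(ε^2 * t^2)) : ℝ) =
      Complex.exp ((-(ε^2) : ℂ) * t^2 + (Complex.I * x) * t + 0) := by
  rw [Complex.ofReal_exp, ← Complex.exp_add]
  congr 1
  push_cast
  ring

lemma gauss_int {ε : ℝ} (hε : 0 < ε) (x : ℝ) :
    ∫ t : ℝ, Complex.exp (Complex.I * t * x) * (Real.exp (-(ε^2 * t^2)) : ℝ) =
      ((Real.sqrt (Real.pi / ε^2) * Real.exp (-(x^2 / (4 * ε^2))) : ℝ) : ℂ) := by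
  have hb : (-(ε^2 : ℂ)).re < 0 := by
    simp only [← Complex.ofReal_pow, neg_re, ofReal_re, neg_lt_zero]
    positivity
  have := integral_cexp_quadratic (b := -(ε^2 : ℂ)) hb (Complex.I * x) 0
  simp_rw [gauss_combine ε x]
  rw [this]
  have h1 : (↑Real.pi / -(-(ε:ℂ)^2)) = ((Real.pi / ε^2 : ℝ) : ℂ) := by push_cast; ring
  rw [h1, show (1/2 : ℂ) = ((1/2:ℝ):ℂ) by norm_num, ← Complex.ofReal_cpow (by positivity) (1/2 : ℝ)]
  have h2 : (0 : ℂ) - (Complex.I * x)^2 / (4 * -((ε:ℂ)^2)) = ((-(x^2 / (4 * ε^2)) : ℝ) : ℂ) := by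
    have : ((ε:ℂ))^2 ≠ 0 := by
      simpa using (by positivity : (ε:ℝ)^2 ≠ 0)
    push_cast
    rw [mul_pow, Complex.I_sq]
    field_simp
    ring
  rw [h2, ← Complex.ofReal_exp]
  push_cast [Real.sqrt_eq_rpow]
  ring

lemma gauss_integrable {ε : ℝ} (hε : 0 < ε) (x : ℝ) :
    Integrable fun t : ℝ => Complex.exp (Complex.I * t * x) * (Real.exp (-(ε^2 * t^2)) : ℝ) := by
  simp_rw [gauss_combine ε x]
  refine integrable_cexp_quadratic' ?_ _ _
  simp only [← Complex.ofReal_pow, neg_re, ofReal_re, neg_lt_zero]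
  positivity

noncomputable def g0 (ε x : ℝ) : ℝ := Real.sqrt (Real.pi / ε^2) * Real.exp (-(x^2 / (4 * ε^2)))

lemma g0_nonneg (ε x : ℝ) : 0 ≤ g0 ε x := by unfold g0; positivity

lemma g0_le (ε x : ℝ) : g0 ε x ≤ Real.sqrt (Real.pi / ε^2) := by
  unfold g0
  have h1 : Real.exp (-(x^2 / (4 * ε^2))) ≤ 1 := by
    rw [Real.exp_le_one_iff]
    have : 0 ≤ x^2 / (4 * ε^2) := by positivity
    linarith
  nlinarith [Real.sqrt_nonneg (Real.pi / ε^2), Real.exp_pos (-(x^2 / (4 * ε^2)))]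

lemma norm_exp_I_mul (t x : ℝ) : ‖Complex.exp ((Complex.I * t) * (x:ℝ))‖ = 1 := by
  rw [Complex.norm_exp]
  simp [Complex.mul_re]

lemma norm_exp_neg_I_mul (t x : ℝ) : ‖Complex.exp (-(Complex.I * t) * (x:ℝ))‖ = 1 := by
  rw [Complex.norm_exp]
  simp [Complex.mul_re]

set_option maxHeartbeats 1000000 in
lemma resonance_key {ε : ℝ} (hε : 0 < ε) (c b : ℕ → ℝ)
    (hc0 : ∀ k, 0 ≤ c k) (hb0 : ∀ k, 0 ≤ b k) (hc : Summable c) (hb : Summable b) :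
    (∫ t : ℝ, (∑' k : ℕ, (c k : ℂ) * Complex.exp (-(Complex.I * t) * (Real.log ((k:ℝ)+1) : ℝ))) *
        ((∑' m : ℕ, (b m : ℂ) * Complex.exp ((Complex.I * t) * (Real.log ((m:ℝ)+1) : ℝ))) *
         (∑' n : ℕ, (b n : ℂ) * Complex.exp (-(Complex.I * t) * (Real.log ((n:ℝ)+1) : ℝ)))) *
        ((Real.exp (-(ε^2 * t^2)) : ℝ) : ℂ))
      = ((∑' p : ℕ × ℕ × ℕ, (c p.1 * (b p.2.1 * b p.2.2)) *
          g0 ε (Real.log ((p.2.1:ℝ)+1) - Real.log ((p.1:ℝ)+1) - Real.log ((p.2.2:ℝ)+1))) : ℝ) := by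
  set F : ℕ × ℕ × ℕ → ℝ → ℂ := fun p t =>
    ((c p.1 : ℂ) * Complex.exp (-(Complex.I * t) * (Real.log ((p.1:ℝ)+1) : ℝ))) *
    (((b p.2.1 : ℂ) * Complex.exp ((Complex.I * t) * (Real.log ((p.2.1:ℝ)+1) : ℝ))) *
     ((b p.2.2 : ℂ) * Complex.exp (-(Complex.I * t) * (Real.log ((p.2.2:ℝ)+1) : ℝ)))) *
    ((Real.exp (-(ε^2 * t^2)) : ℝ) : ℂ) with hF
  set x : ℕ × ℕ × ℕ → ℝ := fun p =>
    Real.log ((p.2.1:ℝ)+1) - Real.log ((p.1:ℝ)+1) - Real.log ((p.2.2:ℝ)+1) with hx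
  set C : ℕ × ℕ × ℕ → ℝ := fun p => c p.1 * (b p.2.1 * b p.2.2) with hC
  have hC0 : ∀ p, 0 ≤ C p := fun p => mul_nonneg (hc0 _) (mul_nonneg (hb0 _) (hb0 _))
  have hcn : ∀ t : ℝ, Summable (fun k : ℕ =>
      ‖(c k : ℂ) * Complex.exp (-(Complex.I * t) * (Real.log ((k:ℝ)+1) : ℝ))‖) := by
    intro t
    simp only [norm_mul, norm_exp_neg_I_mul, mul_one, Complex.norm_real, Real.norm_eq_abs]
    exact hc.abs
  have hbn1 : ∀ t : ℝ, Summable (fun m : ℕ =>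
      ‖(b m : ℂ) * Complex.exp ((Complex.I * t) * (Real.log ((m:ℝ)+1) : ℝ))‖) := by
    intro t
    simp only [norm_mul, norm_exp_I_mul, mul_one, Complex.norm_real, Real.norm_eq_abs]
    exact hb.abs
  have hbn2 : ∀ t : ℝ, Summable (fun n : ℕ =>
      ‖(b n : ℂ) * Complex.exp (-(Complex.I * t) * (Real.log ((n:ℝ)+1) : ℝ))‖) := by
    intro t
    simp only [norm_mul, norm_exp_neg_I_mul, mul_one, Complex.norm_real, Real.norm_eq_abs]
    exact hb.abs
  have hbb : Summable (fun z : ℕ × ℕ => b z.1 * b z.2) :=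
    hb.mul_of_nonneg hb hb0 hb0
  have hCsum : Summable C :=
    hc.mul_of_nonneg hbb hc0 (fun z => mul_nonneg (hb0 _) (hb0 _))
  have hpt : ∀ t : ℝ,
      (∑' k : ℕ, (c k : ℂ) * Complex.exp (-(Complex.I * t) * (Real.log ((k:ℝ)+1) : ℝ))) *
        ((∑' m : ℕ, (b m : ℂ) * Complex.exp ((Complex.I * t) * (Real.log ((m:ℝ)+1) : ℝ))) *
         (∑' n : ℕ, (b n : ℂ) * Complex.exp (-(Complex.I * t) * (Real.log ((n:ℝ)+1) : ℝ)))) *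
        ((Real.exp (-(ε^2 * t^2)) : ℝ) : ℂ) = ∑' p : ℕ × ℕ × ℕ, F p t := by
    intro t
    rw [tsum_mul_tsum_of_summable_norm
      (f := fun m : ℕ => (b m : ℂ) * Complex.exp ((Complex.I * t) * (Real.log ((m:ℝ)+1) : ℝ)))
      (g := fun n : ℕ => (b n : ℂ) * Complex.exp (-(Complex.I * t) * (Real.log ((n:ℝ)+1) : ℝ)))
      (hbn1 t) (hbn2 t)]
    have hzn : Summable (fun z : ℕ × ℕ =>
        ‖((b z.1 : ℂ) * Complex.exp ((Complex.I * t) * (Real.log ((z.1:ℝ)+1) : ℝ))) *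
          ((b z.2 : ℂ) * Complex.exp (-(Complex.I * t) * (Real.log ((z.2:ℝ)+1) : ℝ)))‖) := by
      simp only [norm_mul, norm_exp_I_mul, norm_exp_neg_I_mul, mul_one, Complex.norm_real,
        Real.norm_eq_abs]
      exact hb.abs.mul_of_nonneg hb.abs (fun k => abs_nonneg _) (fun k => abs_nonneg _)
    rw [tsum_mul_tsum_of_summable_norm (hcn t) hzn, ← tsum_mul_right]
  have hFeq : ∀ p (t : ℝ), F p t =
      ((C p : ℝ) : ℂ) * (Complex.exp (Complex.I * t * (x p : ℝ)) *
        ((Real.exp (-(ε^2 * t^2)) : ℝ) : ℂ)) := by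
    intro p t
    have hE : Complex.exp (-(Complex.I * t) * (Real.log ((p.1:ℝ)+1) : ℝ)) *
        (Complex.exp ((Complex.I * t) * (Real.log ((p.2.1:ℝ)+1) : ℝ)) *
         Complex.exp (-(Complex.I * t) * (Real.log ((p.2.2:ℝ)+1) : ℝ))) =
        Complex.exp (Complex.I * t * (x p : ℝ)) := by
      rw [← Complex.exp_add, ← Complex.exp_add]
      congr 1
      simp only [hx]
      push_cast
      ring
    rw [hF, hC]
    simp only
    rw [← hE]
    push_cast
    ring
  have hFint : ∀ p, Integrable (F p) := by
    intro p
    rw [show F p = fun t : ℝ => ((C p : ℝ) : ℂ) * (Complex.exp (Complex.I * t * (x p : ℝ)) *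
        Complex.ofReal (Real.exp (-(ε^2 * t^2)))) from funext (hFeq p)]
    exact (gauss_integrable hε (x p)).const_mul _
  have hnormint : ∀ p, (∫ t : ℝ, ‖F p t‖) = C p * ∫ t : ℝ, Real.exp (-(ε^2 * t^2)) := by
    intro p
    have h1 : ∀ t : ℝ, ‖F p t‖ = C p * Real.exp (-(ε^2 * t^2)) := by
      intro t
      rw [hFeq p t, norm_mul, norm_mul,
        show Complex.I * t * (x p : ℝ) = (Complex.I * t) * ((x p : ℝ) : ℝ) by push_cast; ring,
        norm_exp_I_mul]
      simp only [Complex.norm_real, Real.norm_eq_abs, one_mul]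
      rw [_root_.abs_of_nonneg (hC0 p), _root_.abs_of_nonneg (Real.exp_pos _).le]
    simp_rw [h1]
    exact integral_const_mul _ _
  have hsumint : Summable (fun p => ∫ t : ℝ, ‖F p t‖) := by
    simp_rw [hnormint]
    exact hCsum.mul_right _
  rw [show (fun t : ℝ =>
      (∑' k : ℕ, (c k : ℂ) * Complex.exp (-(Complex.I * t) * (Real.log ((k:ℝ)+1) : ℝ))) *
        ((∑' m : ℕ, (b m : ℂ) * Complex.exp ((Complex.I * t) * (Real.log ((m:ℝ)+1) : ℝ))) *
         (∑' n : ℕ, (b n : ℂ) * Complex.exp (-(Complex.I * t) * (Real.log ((n:ℝ)+1) : ℝ)))) *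
        ((Real.exp (-(ε^2 * t^2)) : ℝ) : ℂ)) = fun t => ∑' p : ℕ × ℕ × ℕ, F p t
    from funext hpt]
  rw [← integral_tsum_of_summable_integral_norm hFint hsumint]
  have hint : ∀ p, (∫ t : ℝ, F p t) = ((C p * g0 ε (x p) : ℝ) : ℂ) := by
    intro p
    rw [show F p = fun t : ℝ => ((C p : ℝ) : ℂ) * (Complex.exp (Complex.I * t * (x p : ℝ)) *
        Complex.ofReal (Real.exp (-(ε^2 * t^2)))) from funext (hFeq p)]
    rw [integral_const_mul, gauss_int hε (x p), ← Complex.ofReal_mul]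
    rfl
  rw [tsum_congr hint, ← Complex.ofReal_tsum]

lemma cpow_nat_succ (n : ℕ) (y : ℂ) :
    ((n + 1 : ℕ) : ℂ) ^ y = Complex.exp (y * ((Real.log ((n:ℝ)+1) : ℝ) : ℂ)) := by
  have h0 : ((n + 1 : ℕ) : ℂ) ≠ 0 := Nat.cast_ne_zero.mpr (Nat.succ_ne_zero n)
  rw [Complex.cpow_def_of_ne_zero h0,
    show ((n + 1 : ℕ) : ℂ) = (((n:ℝ) + 1 : ℝ) : ℂ) by push_cast; ring,
    ← Complex.ofReal_log (by positivity), mul_comm]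

lemma conj_exp_I_mul (t x : ℝ) :
    (starRingEnd ℂ) (Complex.exp ((Complex.I * t) * (x : ℝ))) =
      Complex.exp (-(Complex.I * t) * (x : ℝ)) := by
  rw [← Complex.exp_conj]
  congr 1
  simp [map_mul, Complex.conj_I, Complex.conj_ofReal]

set_option maxHeartbeats 2000000 in
/-- **Resonance lower bound (positivity step).**
Let `ε > 0`.  Let `q : ℕ → ℝ` (indexed by positive integers) be completely multiplicative
(`q (m n) = q m · q n` for all `m, n ≥ 1`, `q 1 = 1`) with `0 ≤ q p < 1` for every prime `p` and
`q p = 0` for all but finitely many primes `p`.  Let `(a_k)_{k ≥ 1}` be nonnegative reals with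
`Σ_{k ≥ 1} a_k < ∞`.  Then the integral
`I₁ = ∫_ℝ (Σ_{k≥1} a_k k^{−it}) · |Σ_{n≥1} q_n n^{it}|² · e^{−ε² t²} dt`
is a real number and satisfies
`I₁ ≥ (Σ_{k≥1} a_k q_k) · ∫_ℝ |Σ_{n≥1} q_n n^{it}|² e^{−ε² t²} dt`. -/
theorem resonance_integral_lower_bound
    (ε : ℝ) (hε : 0 < ε) (q : ℕ → ℝ) (a : ℕ → ℝ)
    (hq1 : q 1 = 1)
    (hqmul : ∀ m n : ℕ, 1 ≤ m → 1 ≤ n → q (m * n) = q m * q n)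
    (hqp : ∀ p : ℕ, p.Prime → 0 ≤ q p ∧ q p < 1)
    (hqfin : {p : ℕ | p.Prime ∧ q p ≠ 0}.Finite)
    (hann : ∀ n : ℕ, 1 ≤ n → 0 ≤ a n)
    (hasum : Summable fun n : ℕ => a (n + 1)) :
    (∫ t : ℝ,
        (∑' n : ℕ, (a (n + 1) : ℂ) * ((n + 1 : ℕ) : ℂ) ^ (-(Complex.I * (t : ℂ)))) *
          ((‖∑' n : ℕ, (q (n + 1) : ℂ) * ((n + 1 : ℕ) : ℂ) ^ (Complex.I * (t : ℂ))‖ : ℝ) : ℂ) ^ 2 *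
          ((Real.exp (-(ε ^ 2 * t ^ 2)) : ℝ) : ℂ)).im = 0
    ∧ (∑' n : ℕ, a (n + 1) * q (n + 1)) *
        (∫ t : ℝ,
          (‖∑' n : ℕ, (q (n + 1) : ℂ) * ((n + 1 : ℕ) : ℂ) ^ (Complex.I * (t : ℂ))‖) ^ 2 *
            Real.exp (-(ε ^ 2 * t ^ 2)))
      ≤ (∫ t : ℝ,
          (∑' n : ℕ, (a (n + 1) : ℂ) * ((n + 1 : ℕ) : ℂ) ^ (-(Complex.I * (t : ℂ)))) *
            ((‖∑' n : ℕ, (q (n + 1) : ℂ) * ((n + 1 : ℕ) : ℂ) ^ (Complex.I * (t : ℂ))‖ : ℝ) : ℂ) ^ 2 *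
            ((Real.exp (-(ε ^ 2 * t ^ 2)) : ℝ) : ℂ)).re := by
  classical
  -- the completely multiplicative extension of `q` as a monoid hom
  let Q : ℕ →* ℝ :=
  { toFun := fun n => if n = 0 then 0 else q n
    map_one' := by simp [hq1]
    map_mul' := by
      intro m n
      rcases eq_or_ne m 0 with rfl | hm
      · simp
      rcases eq_or_ne n 0 with rfl | hn
      · simp
      simp only [mul_eq_zero, hm, hn, or_self, if_false, if_neg hm, if_neg hn]
      exact hqmul m n (Nat.one_le_iff_ne_zero.mpr hm) (Nat.one_le_iff_ne_zero.mpr hn) }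
  have hQ : ∀ n : ℕ, n ≠ 0 → Q n = q n := fun n hn => if_neg hn
  have hQprod : ∀ n : ℕ, n ≠ 0 → Q n = (n.primeFactorsList.map Q).prod := by
    intro n hn
    conv_lhs => rw [← Nat.prod_primeFactorsList hn]
    exact map_list_prod Q _
  have hQ0 : ∀ n : ℕ, 0 ≤ Q n := by
    intro n
    rcases eq_or_ne n 0 with rfl | hn
    · simp [Q]
    rw [hQprod n hn]
    refine List.prod_nonneg ?_
    intro r hr
    obtain ⟨p, hp, rfl⟩ := List.mem_map.mp hr
    have hpp := Nat.prime_of_mem_primeFactorsList hp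
    rw [hQ p hpp.ne_zero]
    exact (hqp p hpp).1
  -- summability of Q
  have hQp1 : ∀ {p : ℕ}, p.Prime → ‖Q p‖ < 1 := by
    intro p hp
    rw [hQ p hp.ne_zero, Real.norm_eq_abs, _root_.abs_of_nonneg (hqp p hp).1]
    exact (hqp p hp).2
  set S : Finset ℕ := hqfin.toFinset with hS
  have hsupp : ∀ n : ℕ, n ∉ Nat.factoredNumbers S → Q n = 0 := by
    intro n hn
    rcases eq_or_ne n 0 with rfl | hn0
    · simp [Q]
    rw [Nat.mem_factoredNumbers] at hn
    push_neg at hn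
    obtain ⟨p, hpmem, hpS⟩ := hn hn0
    have hpp := Nat.prime_of_mem_primeFactorsList hpmem
    have hqp0 : q p = 0 := by
      by_contra h
      exact hpS (by simp [hS, Set.Finite.mem_toFinset]; exact ⟨hpp, h⟩)
    have hQp0 : Q p = 0 := by rw [hQ p hpp.ne_zero, hqp0]
    rw [hQprod n hn0]
    exact List.prod_eq_zero (by rw [← hQp0]; exact List.mem_map_of_mem (f := Q) hpmem)
  have hQsub : Summable (fun m : Nat.factoredNumbers S => Q m) :=
    (EulerProduct.summable_and_hasSum_factoredNumbers_prod_filter_prime_geometric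
      (f := Q) hQp1 S).1.of_norm
  have hQsum : Summable Q := by
    refine (summable_subtype_and_compl).mp ⟨hQsub, ?_⟩
    rw [show (fun x : ↥(Nat.factoredNumbers S)ᶜ => Q x) = fun _ => 0 from
      funext fun x => hsupp x x.2]
    exact summable_zero
  -- shifted sequences
  set b : ℕ → ℝ := fun n => q (n + 1) with hbdef
  set c : ℕ → ℝ := fun n => a (n + 1) with hcdef
  have hb0 : ∀ n, 0 ≤ b n := fun n => by
    rw [hbdef]; simpa using hQ (n+1) (Nat.succ_ne_zero n) ▸ hQ0 (n+1)
  have hc0 : ∀ n, 0 ≤ c n := fun n => hann (n+1) (Nat.succ_le_succ (Nat.zero_le n))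
  have hbsum : Summable b := by
    have h1 : Summable (fun n => Q (n + 1)) := (summable_nat_add_iff 1).mpr hQsum
    refine h1.congr fun n => ?_
    rw [hQ (n+1) (Nat.succ_ne_zero n)]
  have hcsum : Summable c := hasum
  -- helper abbreviations used implicitly below
  have hA : ∀ t : ℝ,
      (∑' n : ℕ, (a (n + 1) : ℂ) * ((n + 1 : ℕ) : ℂ) ^ (-(Complex.I * (t : ℂ)))) =
      ∑' k : ℕ, (c k : ℂ) * Complex.exp (-(Complex.I * t) * ((Real.log ((k:ℝ)+1) : ℝ) : ℂ)) :=
    fun t => tsum_congr fun k => by rw [cpow_nat_succ k (-(Complex.I * t))]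
  have hRf : ∀ t : ℝ,
      (∑' n : ℕ, (q (n + 1) : ℂ) * ((n + 1 : ℕ) : ℂ) ^ (Complex.I * (t : ℂ))) =
      ∑' m : ℕ, (b m : ℂ) * Complex.exp ((Complex.I * t) * ((Real.log ((m:ℝ)+1) : ℝ) : ℂ)) :=
    fun t => tsum_congr fun m => by rw [cpow_nat_succ m (Complex.I * t)]
  have hRc : ∀ t : ℝ,
      (starRingEnd ℂ)
        (∑' m : ℕ, (b m : ℂ) * Complex.exp ((Complex.I * t) * ((Real.log ((m:ℝ)+1) : ℝ) : ℂ))) =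
      ∑' n : ℕ, (b n : ℂ) * Complex.exp (-(Complex.I * t) * ((Real.log ((n:ℝ)+1) : ℝ) : ℂ)) := by
    intro t
    rw [starRingEnd_apply, tsum_star]
    refine tsum_congr fun n => ?_
    rw [star_mul']
    rw [show star ((b n : ℝ) : ℂ) = ((b n : ℝ) : ℂ) from Complex.conj_ofReal _,
      show star (Complex.exp ((Complex.I * t) * ((Real.log ((n:ℝ)+1) : ℝ) : ℂ))) =
        Complex.exp (-(Complex.I * t) * ((Real.log ((n:ℝ)+1) : ℝ) : ℂ)) from
        conj_exp_I_mul t _]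
  have habs2 : ∀ t : ℝ,
      ((‖∑' n : ℕ, (q (n + 1) : ℂ) * ((n + 1 : ℕ) : ℂ) ^ (Complex.I * (t : ℂ))‖ : ℝ) : ℂ) ^ 2 =
      (∑' m : ℕ, (b m : ℂ) * Complex.exp ((Complex.I * t) * ((Real.log ((m:ℝ)+1) : ℝ) : ℂ))) *
      (∑' n : ℕ, (b n : ℂ) * Complex.exp (-(Complex.I * t) * ((Real.log ((n:ℝ)+1) : ℝ) : ℂ))) := by
    intro t
    rw [← Complex.ofReal_pow, Complex.sq_norm, ← Complex.mul_conj, hRf t, hRc t]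
  -- the complex integral as a real series
  have hcomplex :
      (∫ t : ℝ,
        (∑' n : ℕ, (a (n + 1) : ℂ) * ((n + 1 : ℕ) : ℂ) ^ (-(Complex.I * (t : ℂ)))) *
          ((‖∑' n : ℕ, (q (n + 1) : ℂ) * ((n + 1 : ℕ) : ℂ) ^ (Complex.I * (t : ℂ))‖ : ℝ) : ℂ) ^ 2 *
          ((Real.exp (-(ε ^ 2 * t ^ 2)) : ℝ) : ℂ)) =
      ((∑' p : ℕ × ℕ × ℕ, (c p.1 * (b p.2.1 * b p.2.2)) *
          g0 ε (Real.log ((p.2.1:ℝ)+1) - Real.log ((p.1:ℝ)+1) - Real.log ((p.2.2:ℝ)+1))) : ℝ) := by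
    rw [show (fun t : ℝ =>
        (∑' n : ℕ, (a (n + 1) : ℂ) * ((n + 1 : ℕ) : ℂ) ^ (-(Complex.I * (t : ℂ)))) *
          ((‖∑' n : ℕ, (q (n + 1) : ℂ) * ((n + 1 : ℕ) : ℂ) ^ (Complex.I * (t : ℂ))‖ : ℝ) : ℂ) ^ 2 *
          ((Real.exp (-(ε ^ 2 * t ^ 2)) : ℝ) : ℂ)) = fun t : ℝ =>
        (∑' k : ℕ, (c k : ℂ) * Complex.exp (-(Complex.I * t) * ((Real.log ((k:ℝ)+1) : ℝ) : ℂ))) *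
        ((∑' m : ℕ, (b m : ℂ) * Complex.exp ((Complex.I * t) * ((Real.log ((m:ℝ)+1) : ℝ) : ℂ))) *
         (∑' n : ℕ, (b n : ℂ) * Complex.exp (-(Complex.I * t) * ((Real.log ((n:ℝ)+1) : ℝ) : ℂ)))) *
        ((Real.exp (-(ε^2 * t^2)) : ℝ) : ℂ)
      from funext fun t => by rw [hA t, habs2 t]]
    exact resonance_key hε c b hc0 hb0 hcsum hbsum
  -- indicator sequence
  set e : ℕ → ℝ := fun k => if k = 0 then 1 else 0 with hedef
  have he0 : ∀ k, 0 ≤ e k := by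
    intro k
    rw [hedef]
    dsimp only
    split <;> norm_num
  have hesum : Summable e := summable_of_ne_finset_zero (s := {0}) (by
    intro k hk
    rw [hedef]
    simp only [Finset.mem_singleton] at hk
    simp [hk])
  have hetsum : (∑' k : ℕ, e k) = 1 := by
    rw [hedef]
    exact tsum_ite_eq 0 1
  have hone : ∀ t : ℝ,
      (∑' k : ℕ, (e k : ℂ) * Complex.exp (-(Complex.I * t) * ((Real.log ((k:ℝ)+1) : ℝ) : ℂ))) = 1 := by
    intro t
    rw [tsum_eq_single 0 (by
      intro k hk
      rw [hedef]
      simp [hk])]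
    rw [hedef]
    norm_num
  -- the weight function over pairs
  set W : ℕ × ℕ → ℝ := fun z =>
    (b z.1 * b z.2) * g0 ε (Real.log ((z.1:ℝ)+1) - Real.log ((z.2:ℝ)+1)) with hWdef
  have hW0 : ∀ z, 0 ≤ W z := fun z =>
    mul_nonneg (mul_nonneg (hb0 _) (hb0 _)) (g0_nonneg _ _)
  have hbb : Summable (fun z : ℕ × ℕ => b z.1 * b z.2) := hbsum.mul_of_nonneg hbsum hb0 hb0
  have hWsum : Summable W := by
    refine Summable.of_nonneg_of_le hW0 (fun z => ?_) (hbb.mul_right (Real.sqrt (Real.pi / ε^2)))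
    exact mul_le_mul_of_nonneg_left (g0_le _ _) (mul_nonneg (hb0 _) (hb0 _))
  -- the real integral as a series over pairs
  have hreal :
      (∫ t : ℝ,
          (‖∑' n : ℕ, (q (n + 1) : ℂ) * ((n + 1 : ℕ) : ℂ) ^ (Complex.I * (t : ℂ))‖) ^ 2 *
            Real.exp (-(ε ^ 2 * t ^ 2))) = ∑' z : ℕ × ℕ, W z := by
    rw [← RCLike.ofReal_inj (K := ℂ), ← integral_ofReal]
    simp only [← RCLike.algebraMap_eq_ofReal, Complex.coe_algebraMap]
    rw [show (fun t : ℝ =>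
        (((‖∑' n : ℕ, (q (n + 1) : ℂ) * ((n + 1 : ℕ) : ℂ) ^ (Complex.I * (t : ℂ))‖) ^ 2 *
            Real.exp (-(ε ^ 2 * t ^ 2)) : ℝ) : ℂ)) = fun t : ℝ =>
        (∑' k : ℕ, (e k : ℂ) * Complex.exp (-(Complex.I * t) * ((Real.log ((k:ℝ)+1) : ℝ) : ℂ))) *
        ((∑' m : ℕ, (b m : ℂ) * Complex.exp ((Complex.I * t) * ((Real.log ((m:ℝ)+1) : ℝ) : ℂ))) *
         (∑' n : ℕ, (b n : ℂ) * Complex.exp (-(Complex.I * t) * ((Real.log ((n:ℝ)+1) : ℝ) : ℂ)))) *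
        ((Real.exp (-(ε^2 * t^2)) : ℝ) : ℂ)
      from funext fun t => by
        rw [hone t, Complex.ofReal_mul, Complex.ofReal_pow, habs2 t]
        ring]
    rw [resonance_key hε e b he0 hb0 hesum hbsum]
    rw [Complex.ofReal_inj]
    have h1 : ∀ p : ℕ × ℕ × ℕ,
        (e p.1 * (b p.2.1 * b p.2.2)) *
          g0 ε (Real.log ((p.2.1:ℝ)+1) - Real.log ((p.1:ℝ)+1) - Real.log ((p.2.2:ℝ)+1)) =
        e p.1 * W p.2 := by
      intro p
      by_cases hp : p.1 = 0
      · rw [hWdef, hp]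
        norm_num [Real.log_one]
        ring
      · rw [hedef]
        simp [hp]
    rw [tsum_congr h1, ← tsum_mul_tsum_of_summable_norm (f := e) (g := W) hesum.abs hWsum.abs,
      hetsum, one_mul]
  -- summability of the diagonal product
  have hcb : Summable (fun k => c k * b k) := by
    refine Summable.of_nonneg_of_le (fun k => mul_nonneg (hc0 k) (hb0 k)) (fun k => ?_)
      (hcsum.mul_right (∑' n, b n))
    exact mul_le_mul_of_nonneg_left (Summable.le_tsum hbsum k fun j _ => hb0 j) (hc0 k)
  -- summability of the big series
  have hCsum : Summable (fun p : ℕ × ℕ × ℕ => c p.1 * (b p.2.1 * b p.2.2)) :=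
    hcsum.mul_of_nonneg hbb hc0 (fun z => mul_nonneg (hb0 _) (hb0 _))
  have hTsum : Summable (fun p : ℕ × ℕ × ℕ => (c p.1 * (b p.2.1 * b p.2.2)) *
      g0 ε (Real.log ((p.2.1:ℝ)+1) - Real.log ((p.1:ℝ)+1) - Real.log ((p.2.2:ℝ)+1))) := by
    refine Summable.of_nonneg_of_le
      (fun p => mul_nonneg (mul_nonneg (hc0 _) (mul_nonneg (hb0 _) (hb0 _))) (g0_nonneg _ _))
      (fun p => ?_) (hCsum.mul_right (Real.sqrt (Real.pi / ε^2)))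
    exact mul_le_mul_of_nonneg_left (g0_le _ _)
      (mul_nonneg (hc0 _) (mul_nonneg (hb0 _) (hb0 _)))
  constructor
  · rw [hcomplex]
    exact Complex.ofReal_im _
  · rw [hcomplex, Complex.ofReal_re, hreal]
    rw [show (∑' n : ℕ, a (n + 1) * q (n + 1)) = ∑' k : ℕ, c k * b k from rfl]
    rw [tsum_mul_tsum_of_summable_norm (f := fun k : ℕ => c k * b k) (g := W) hcb.abs hWsum.abs]
    set i : ℕ × ℕ × ℕ → ℕ × ℕ × ℕ := fun p => (p.1, ((p.1+1)*(p.2.1+1)-1, p.2.2)) with hidef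
    have hinj : Function.Injective i := by
      intro p p' h
      rw [hidef] at h
      simp only [Prod.mk.injEq] at h
      obtain ⟨h1, h2, h3⟩ := h
      have h4 : (p.1+1)*(p.2.1+1) = (p'.1+1)*(p'.2.1+1) := by
        have e1 : (p.1+1)*(p.2.1+1) ≥ 1 := Nat.one_le_iff_ne_zero.mpr (by positivity)
        have e2 : (p'.1+1)*(p'.2.1+1) ≥ 1 := Nat.one_le_iff_ne_zero.mpr (by positivity)
        omega
      rw [h1] at h4
      have h5 : p.2.1 = p'.2.1 := by
        have := Nat.eq_of_mul_eq_mul_left (Nat.succ_pos p'.1) h4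
        omega
      exact Prod.ext h1 (Prod.ext h5 h3)
    have hle : ∀ p : ℕ × ℕ × ℕ, (c p.1 * b p.1) * W p.2 ≤
        (c (i p).1 * (b (i p).2.1 * b (i p).2.2)) *
          g0 ε (Real.log (((i p).2.1:ℝ)+1) - Real.log (((i p).1:ℝ)+1) - Real.log (((i p).2.2:ℝ)+1)) := by
      intro p
      rw [hidef]
      simp only
      have hmn : ((p.1+1)*(p.2.1+1)-1) + 1 = (p.1+1)*(p.2.1+1) := by
        have : (p.1+1)*(p.2.1+1) ≥ 1 := Nat.one_le_iff_ne_zero.mpr (by positivity)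
        omega
      have hbval : b ((p.1+1)*(p.2.1+1)-1) = b p.1 * b p.2.1 := by
        show q (((p.1+1)*(p.2.1+1)-1) + 1) = q (p.1+1) * q (p.2.1+1)
        rw [hmn]
        exact hqmul _ _ (Nat.succ_le_succ (Nat.zero_le _)) (Nat.succ_le_succ (Nat.zero_le _))
      have hlog : Real.log ((((p.1+1)*(p.2.1+1)-1 : ℕ):ℝ)+1) =
          Real.log ((p.1:ℝ)+1) + Real.log ((p.2.1:ℝ)+1) := by
        have hcast : ((((p.1+1)*(p.2.1+1)-1 : ℕ):ℝ)+1) = ((p.1:ℝ)+1) * ((p.2.1:ℝ)+1) := by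
          rw [show ((((p.1+1)*(p.2.1+1)-1 : ℕ):ℝ)+1) = (((((p.1+1)*(p.2.1+1)-1) + 1 : ℕ)):ℝ) by
            push_cast; ring, hmn]
          push_cast
          ring
        rw [hcast, Real.log_mul (by positivity) (by positivity)]
      rw [hbval, hlog, hWdef]
      simp only
      rw [show Real.log ((p.1:ℝ)+1) + Real.log ((p.2.1:ℝ)+1) - Real.log ((p.1:ℝ)+1) -
          Real.log ((p.2.2:ℝ)+1) = Real.log ((p.2.1:ℝ)+1) - Real.log ((p.2.2:ℝ)+1) by ring]
      apply le_of_eq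
      ring
    have hfsum : Summable (fun p : ℕ × ℕ × ℕ => (c p.1 * b p.1) * W p.2) :=
      hcb.mul_of_nonneg hWsum (fun k => mul_nonneg (hc0 k) (hb0 k)) hW0
    exact Summable.tsum_le_tsum_of_inj i hinj
      (fun p _ => mul_nonneg (mul_nonneg (hc0 _) (mul_nonneg (hb0 _) (hb0 _))) (g0_nonneg _ _))
      hle hfsum hTsum
end

section
/- There is a constant C depending only on k such that for all X ≥ 3 the following holds: if for each prime p ≤ X we are given complex numbers α_1(p), …, α_k(p) with |α_j(p)| ≤ 1, and we set q_p = 1 − p/X, then |∏_{p ≤ X} ∏_{j=1}^k (p − α_j(p))/(p − α_j(p) q_p) − 1| ≤ C / log X. -/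
-- General product perturbation lemma
lemma prod_sub_one_abs_le {ι : Type*} (s : Finset ι) (g : ι → ℂ) (ε : ℝ) (hε : 0 ≤ ε)
    (h : ∀ i ∈ s, ‖g i - 1‖ ≤ ε) :
    ‖∏ i ∈ s, g i - 1‖ ≤ (1 + ε) ^ s.card - 1 := by
  induction s using Finset.cons_induction with
  | empty => simp
  | cons a s ha ih =>
    rw [Finset.prod_cons, Finset.card_cons]
    have h1 : ‖g a - 1‖ ≤ ε := h a (Finset.mem_cons_self a s)
    have h2 : ‖g a‖ ≤ 1 + ε := by
      calc ‖g a‖ = ‖g a - 1 + 1‖ := by ring_nf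
        _ ≤ ‖g a - 1‖ + ‖1‖ := norm_add_le _ _
        _ ≤ ε + 1 := by simp [h1]
        _ = 1 + ε := by ring
    have ih' := ih (fun i hi => h i (Finset.mem_cons_of_mem hi))
    have key : g a * ∏ i ∈ s, g i - 1 = g a * (∏ i ∈ s, g i - 1) + (g a - 1) := by ring
    have hpow : (1:ℝ) ≤ (1 + ε) ^ s.card := one_le_pow₀ (by linarith)
    calc ‖g a * ∏ i ∈ s, g i - 1‖
        ≤ ‖g a * (∏ i ∈ s, g i - 1)‖ + ‖g a - 1‖ := by
          rw [key]
          exact norm_add_le _ _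
      _ = ‖g a‖ * ‖∏ i ∈ s, g i - 1‖ + ‖g a - 1‖ := by
          rw [norm_mul]
      _ ≤ (1 + ε) * ((1 + ε) ^ s.card - 1) + ε := by
          gcongr
      _ = (1 + ε) ^ (s.card + 1) - 1 := by rw [pow_succ]; ring


lemma factor_bound (X : ℝ) (hX : 3 ≤ X) (p : ℕ) (hp : p.Prime) (hpX : (p:ℝ) ≤ X)
    (a : ℂ) (ha : ‖a‖ ≤ 1) :
    ‖((p:ℂ) - a) / ((p:ℂ) - a * ((1 - (p:ℝ) / X : ℝ) : ℂ)) - 1‖ ≤ 2 / X := by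
  have hX0 : (0:ℝ) < X := by linarith
  have hp2 : (2:ℝ) ≤ (p:ℝ) := by exact_mod_cast hp.two_le
  set q : ℝ := 1 - (p:ℝ) / X with hq
  have hq0 : 0 ≤ q := by
    have h := (div_le_one hX0).mpr hpX
    rw [hq]; linarith
  have hq1 : q ≤ 1 := by
    have h : 0 ≤ (p:ℝ) / X := by positivity
    rw [hq]; linarith
  have habsq : ‖((q:ℝ):ℂ)‖ = q := by
    rw [Complex.norm_real, Real.norm_of_nonneg hq0]
  set D : ℂ := (p:ℂ) - a * ((q:ℝ):ℂ) with hD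
  have hDlb : (p:ℝ) - 1 ≤ ‖D‖ := by
    have h1 : ‖a * ((q:ℝ):ℂ)‖ ≤ 1 := by
      rw [norm_mul, habsq]
      calc ‖a‖ * q ≤ 1 * 1 := by
            apply mul_le_mul ha hq1 hq0 zero_le_one
        _ = 1 := by ring
    have h2 : ‖(p:ℂ)‖ - ‖a * ((q:ℝ):ℂ)‖ ≤ ‖D‖ :=
      norm_sub_norm_le _ _
    have h3 : ‖(p:ℂ)‖ = (p:ℝ) := by
      rw [Complex.norm_natCast]
    linarith
  have hD0 : D ≠ 0 := by
    intro h
    rw [h, norm_zero] at hDlb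
    linarith
  have key : ((p:ℂ) - a) / D - 1 = a * (((q:ℝ):ℂ) - 1) / D := by
    field_simp
    ring
  rw [key, norm_div, norm_mul]
  have habs1 : ‖((q:ℝ):ℂ) - 1‖ = (p:ℝ) / X := by
    have : ((q:ℝ):ℂ) - 1 = ((q - 1 : ℝ) : ℂ) := by push_cast; ring
    rw [this, Complex.norm_real, Real.norm_of_nonpos (by linarith)]
    rw [hq]; ring
  rw [habs1]
  calc ‖a‖ * ((p:ℝ) / X) / ‖D‖
      ≤ 1 * ((p:ℝ) / X) / ((p:ℝ) - 1) := by
        apply div_le_div₀ (by positivity) (mul_le_mul_of_nonneg_right ha (by positivity)) (by linarith) hDlb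
    _ ≤ 2 / X := by
        rw [one_mul, div_div, div_le_div_iff₀ (mul_pos hX0 (by linarith)) hX0]
        nlinarith


lemma cheb (X : ℝ) (hX : 3 ≤ X) :
    ((Nat.primesBelow (⌊X⌋₊ + 1)).card : ℝ) ≤ 8 * X / Real.log X := by
  have hX0 : (0:ℝ) < X := by linarith
  have hlogX : (0:ℝ) < Real.log X := Real.log_pos (by linarith)
  set N := ⌊X⌋₊ with hN
  set S := Nat.primesBelow (N + 1) with hS
  have hmem : ∀ p ∈ S, p.Prime ∧ (2:ℝ) ≤ (p:ℝ) ∧ (p:ℝ) ≤ X := by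
    intro p hp
    have h1 := Nat.prime_of_mem_primesBelow hp
    have h2 := Nat.lt_of_mem_primesBelow hp
    refine ⟨h1, by exact_mod_cast h1.two_le, ?_⟩
    have : p ≤ N := Nat.lt_succ_iff.mp h2
    calc (p:ℝ) ≤ (N:ℝ) := by exact_mod_cast this
      _ ≤ X := Nat.floor_le hX0.le
  -- log of primorial bound
  have hprimorial : ∑ p ∈ S, Real.log p ≤ X * Real.log 4 := by
    have h1 : ∑ p ∈ S, Real.log p = Real.log (∏ p ∈ S, (p:ℝ)) := by
      rw [Real.log_prod]
      intro p hp
      have := (hmem p hp).2.1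
      positivity
    have h2 : (∏ p ∈ S, (p:ℝ)) = ((primorial N : ℕ) : ℝ) := by
      rw [primorial, hS, Nat.primesBelow]
      push_cast
      rfl
    have h3 : ((primorial N : ℕ) : ℝ) ≤ (4:ℝ) ^ N := by
      exact_mod_cast primorial_le_4_pow N
    have h4 : Real.log ((primorial N : ℕ) : ℝ) ≤ N * Real.log 4 := by
      calc Real.log ((primorial N : ℕ) : ℝ) ≤ Real.log ((4:ℝ) ^ N) :=
            Real.log_le_log (by exact_mod_cast (primorial_pos N)) h3
        _ = N * Real.log 4 := by rw [Real.log_pow]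
    have h5 : (N:ℝ) ≤ X := Nat.floor_le hX0.le
    have h6 : (0:ℝ) ≤ Real.log 4 := Real.log_nonneg (by norm_num)
    rw [h1, h2]
    calc Real.log ((primorial N : ℕ) : ℝ) ≤ N * Real.log 4 := h4
      _ ≤ X * Real.log 4 := by nlinarith
  set L := S.filter (fun p : ℕ => Real.sqrt X < (p:ℝ)) with hL
  set M := S.filter (fun p : ℕ => ¬ Real.sqrt X < (p:ℝ)) with hM
  have hcardsplit : L.card + M.card = S.card := Finset.card_filter_add_card_filter_not _
  -- large primes
  have hLcard : (L.card : ℝ) * (Real.log X / 2) ≤ X * Real.log 4 := by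
    have h1 : ∀ p ∈ L, Real.log X / 2 ≤ Real.log p := by
      intro p hp
      rw [hL, Finset.mem_filter] at hp
      have hsq : Real.sqrt X < (p:ℝ) := hp.2
      calc Real.log X / 2 = Real.log (Real.sqrt X) := (Real.log_sqrt hX0.le).symm
        _ ≤ Real.log p := Real.log_le_log (Real.sqrt_pos.mpr hX0) hsq.le
    have h2 : (L.card : ℝ) * (Real.log X / 2) ≤ ∑ p ∈ L, Real.log p := by
      have h := Finset.card_nsmul_le_sum L (fun p => Real.log (p:ℝ)) (Real.log X / 2) h1
      simpa [nsmul_eq_mul] using h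
    have h3 : ∑ p ∈ L, Real.log p ≤ ∑ p ∈ S, Real.log p := by
      apply Finset.sum_le_sum_of_subset_of_nonneg (Finset.filter_subset _ _)
      intro p hp _
      exact Real.log_nonneg (by linarith [(hmem p hp).2.1])
    linarith
  -- small primes
  have hMcard : (M.card : ℝ) ≤ Real.sqrt X := by
    have hsub : M ⊆ Finset.Icc 2 ⌊Real.sqrt X⌋₊ := by
      intro p hp
      rw [hM, Finset.mem_filter] at hp
      have h1 := (hmem p hp.1).1.two_le
      have h2 : (p:ℝ) ≤ Real.sqrt X := not_lt.mp hp.2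
      exact Finset.mem_Icc.mpr ⟨h1, Nat.le_floor h2⟩
    calc (M.card : ℝ) ≤ ((Finset.Icc 2 ⌊Real.sqrt X⌋₊).card : ℝ) := by
          exact_mod_cast Finset.card_le_card hsub
      _ ≤ (⌊Real.sqrt X⌋₊ : ℝ) := by
          rw [Nat.card_Icc]
          push_cast
          have : (⌊Real.sqrt X⌋₊ : ℝ) ≥ 0 := by positivity
          rcases le_or_gt 2 ⌊Real.sqrt X⌋₊ with h | h
          · have : (2:ℝ) ≤ (⌊Real.sqrt X⌋₊:ℝ) := by exact_mod_cast h
            rw [Nat.cast_sub (by omega)]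
            push_cast; linarith
          · interval_cases ⌊Real.sqrt X⌋₊ <;> norm_num
      _ ≤ Real.sqrt X := Nat.floor_le (Real.sqrt_nonneg X)
  -- log X ≤ 2 sqrt X
  have hlogsqrt : Real.log X ≤ 2 * Real.sqrt X := by
    have h1 : Real.log (Real.sqrt X) ≤ Real.sqrt X - 1 :=
      Real.log_le_sub_one_of_pos (Real.sqrt_pos.mpr hX0)
    have h2 : Real.log X = 2 * Real.log (Real.sqrt X) := by
      rw [Real.log_sqrt hX0.le]; ring
    linarith
  have hsqX : Real.sqrt X * Real.sqrt X = X := Real.mul_self_sqrt hX0.le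
  have hlog4 : Real.log 4 ≤ 3 := by
    have := Real.log_le_sub_one_of_pos (by norm_num : (0:ℝ) < 4)
    linarith
  -- combine
  have hL2 : (L.card : ℝ) ≤ 6 * X / Real.log X := by
    rw [le_div_iff₀ hlogX]
    nlinarith
  have hM2 : (M.card : ℝ) ≤ 2 * X / Real.log X := by
    rw [le_div_iff₀ hlogX]
    nlinarith [Real.sqrt_nonneg X]
  have : (S.card : ℝ) = (L.card : ℝ) + (M.card : ℝ) := by exact_mod_cast hcardsplit.symm
  rw [this]
  have : 6 * X / Real.log X + 2 * X / Real.log X = 8 * X / Real.log X := by ring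
  linarith

/-- **Comparing the tilted and untilted Euler factors.**
There is a constant `C > 0` depending only on `k` such that for all `X ≥ 3` the following holds:
if for each prime `p ≤ X` we are given complex numbers `α_1(p), …, α_k(p)` of modulus at most
`1`, and we set `q_p = 1 − p/X`, then
`|∏_{p ≤ X} ∏_{j=1}^k (p − α_j(p))/(p − α_j(p) q_p) − 1| ≤ C / log X`. -/
theorem tilted_euler_factor_comparison (k : ℕ) (hk : 1 ≤ k) :
    ∃ C > (0 : ℝ), ∀ X : ℝ, 3 ≤ X → ∀ α : ℕ → Fin k → ℂ,
      (∀ p ∈ Nat.primesBelow (⌊X⌋₊ + 1), ∀ j : Fin k, ‖α p j‖ ≤ 1) →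
      ‖(∏ p ∈ Nat.primesBelow (⌊X⌋₊ + 1), ∏ j : Fin k,
              ((p : ℂ) - α p j) / ((p : ℂ) - α p j * ((1 - (p : ℝ) / X : ℝ) : ℂ))) - 1‖
        ≤ C / Real.log X := by
  have hk1 : (1:ℝ) ≤ (k:ℝ) := by exact_mod_cast hk
  set B : ℝ := 16 * (k:ℝ) with hB
  have hB0 : 0 < B := by rw [hB]; linarith
  refine ⟨B * Real.exp B, by positivity, ?_⟩
  intro X hX α hα
  have hX0 : (0:ℝ) < X := by linarith
  have hlogX : (0:ℝ) < Real.log X := Real.log_pos (by linarith)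
  have hlogX1 : (1:ℝ) ≤ Real.log X := by
    have h1 : Real.exp 1 ≤ X := by
      have := Real.exp_one_lt_d9
      linarith
    calc (1:ℝ) = Real.log (Real.exp 1) := (Real.log_exp 1).symm
      _ ≤ Real.log X := Real.log_le_log (Real.exp_pos 1) h1
  set S := Nat.primesBelow (⌊X⌋₊ + 1) with hS
  set ε : ℝ := 2 / X with hε
  have hε0 : 0 ≤ ε := by positivity
  -- the inner product bound
  have hinner : ∀ p ∈ S, ‖(∏ j : Fin k, ((p : ℂ) - α p j) / ((p : ℂ) - α p j * ((1 - (p : ℝ) / X : ℝ) : ℂ))) - 1‖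
      ≤ (1 + ε) ^ k - 1 := by
    intro p hp
    have hpp := Nat.prime_of_mem_primesBelow hp
    have hpX : (p:ℝ) ≤ X := by
      have h2 : p ≤ ⌊X⌋₊ := Nat.lt_succ_iff.mp (Nat.lt_of_mem_primesBelow hp)
      calc (p:ℝ) ≤ (⌊X⌋₊:ℝ) := by exact_mod_cast h2
        _ ≤ X := Nat.floor_le hX0.le
    have := prod_sub_one_abs_le Finset.univ
      (fun j : Fin k => ((p : ℂ) - α p j) / ((p : ℂ) - α p j * ((1 - (p : ℝ) / X : ℝ) : ℂ)))
      ε hε0 (fun j _ => factor_bound X hX p hpp hpX (α p j) (hα p hp j))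
    simpa using this
  -- outer product bound
  have hε'0 : 0 ≤ (1 + ε) ^ k - 1 := by
    have : (1:ℝ) ≤ (1 + ε) ^ k := one_le_pow₀ (by linarith)
    linarith
  have houter := prod_sub_one_abs_le S
    (fun p => ∏ j : Fin k, ((p : ℂ) - α p j) / ((p : ℂ) - α p j * ((1 - (p : ℝ) / X : ℝ) : ℂ)))
    ((1 + ε) ^ k - 1) hε'0 hinner
  have hrw : (1 + ((1 + ε) ^ k - 1)) ^ S.card - 1 = (1 + ε) ^ (k * S.card) - 1 := by
    rw [pow_mul]
    ring_nf
  rw [hrw] at houter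
  -- exponential bounds
  set t : ℝ := ε * (k * S.card) with ht
  have ht0 : 0 ≤ t := by positivity
  have hexp1 : (1 + ε) ^ (k * S.card) ≤ Real.exp t := by
    calc (1 + ε) ^ (k * S.card) ≤ (Real.exp ε) ^ (k * S.card) := by
          apply pow_le_pow_left₀ (by linarith)
          linarith [Real.add_one_le_exp ε]
      _ = Real.exp (ε * (k * S.card)) := by
          rw [← Real.exp_nat_mul]
          congr 1
          push_cast
          ring
  -- t ≤ B / log X ≤ B
  have hcheb := cheb X hX
  have htle : t ≤ B / Real.log X := by
    rw [ht, hε, hB, le_div_iff₀ hlogX]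
    have h := (le_div_iff₀ hlogX).mp hcheb
    calc 2 / X * ((k:ℝ) * S.card) * Real.log X
        = (k:ℝ) * (2 / X) * ((S.card:ℝ) * Real.log X) := by ring
      _ ≤ (k:ℝ) * (2 / X) * (8 * X) := by
          apply mul_le_mul_of_nonneg_left h (by positivity)
      _ = 16 * (k:ℝ) := by field_simp; ring
  have htB : t ≤ B := le_trans htle (div_le_self hB0.le hlogX1)
  have hfinal : Real.exp t - 1 ≤ t * Real.exp t := by
    have hm := mul_le_mul_of_nonneg_right (Real.add_one_le_exp (-t)) (Real.exp_pos t).le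
    have hmul : Real.exp (-t) * Real.exp t = 1 := by rw [← Real.exp_add]; simp
    nlinarith
  calc ‖(∏ p ∈ S, ∏ j : Fin k,
              ((p : ℂ) - α p j) / ((p : ℂ) - α p j * ((1 - (p : ℝ) / X : ℝ) : ℂ))) - 1‖
      ≤ (1 + ε) ^ (k * S.card) - 1 := houter
    _ ≤ Real.exp t - 1 := by linarith
    _ ≤ t * Real.exp t := hfinal
    _ ≤ (B / Real.log X) * Real.exp B := by
        apply mul_le_mul htle (Real.exp_le_exp.mpr htB) (Real.exp_pos t).le (by positivity)
    _ = B * Real.exp B / Real.log X := by ring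
end
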